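/- arXiv:2210.16609 — 3 statements merged into one kernel-verified Lean document; each statement's English description precedes it below -/
import Mathlib

section
/- Let $d \geq 1$, let $r \subset \mathbb{R}^d$ be an axis-parallel box with side-length vector $\delta \in \mathbb{R}_{>0}^d$, and consider the translated family $\widehat{T} := \{r + \delta \odot p : p \in \mathbb{Z}^d\}$. Let $B$ and $C$ be axis-parallel boxes containing $r$, set $B_t := B + \delta \odot p_t$ and $C_s := C + \delta \odot p_s$ for $t, s \in \widehat{T}$, and for $\eta > 0$ call a pair $(t,s)$ inadmissible if $\max\{\mathrm{diam}(B_t), \mathrm{diam}(C_s)\} > \eta\, \mathrm{dist}(B_t, C_s)$. Assume $\mathrm{diam}(B) \leq C_{bb}\, \mathrm{diam}(r)$ and $\mathrm{diam}(C) \leq C_{bb}\, \mathrm{diam}(r)$ for some $C_{bb} \geq 1$, and $\mathrm{diam}(r)^d \leq C_{dv}\, \lambda_d(r)$ for a constant $C_{dv} > 1$, where $\lambda_d$ is Lebesgue measure. Then for every $t \in \widehat{T}$, the number of $s \in \widehat{T}$ with $(t,s)$ inadmissible is at most $C_{sp} := 2^{-d}(3 + 2\eta^{-1})^d C_{bb}^d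 \omega_d C_{dv}$, where $\omega_d$ is the volume of the $d$-dimensional Euclidean unit ball. -/
open MeasureTheory Metric
open scoped ENNReal

/-- Distance between two subsets of Euclidean space. -/
noncomputable def setDist {d : ℕ} (X Y : Set (EuclideanSpace ℝ (Fin d))) : ℝ :=
  sInf {r | ∃ x ∈ X, ∃ y ∈ Y, r = dist x y}

/-- The axis-parallel box with lower corner `a` and upper corner `b`. -/
def box {d : ℕ} (a b : Fin d → ℝ) : Set (EuclideanSpace ℝ (Fin d)) :=
  {x | ∀ i, x i ∈ Set.Icc (a i) (b i)}

/-- Translate of a set by a vector `c`. -/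
def trBox {d : ℕ} (X : Set (EuclideanSpace ℝ (Fin d))) (c : EuclideanSpace ℝ (Fin d)) :
    Set (EuclideanSpace ℝ (Fin d)) := (fun x => x + c) '' X

/-- The translation vector `δ ⊙ p` for an integer displacement `p`. -/
noncomputable def mvec {d : ℕ} (δ : Fin d → ℝ) (p : Fin d → ℤ) : EuclideanSpace ℝ (Fin d) :=
  WithLp.toLp 2 (fun i => δ i * (p i : ℝ))

namespace StmtAux
variable {d : ℕ}

/-- corner as Euclidean point -/
def pt (a : Fin d → ℝ) : EuclideanSpace ℝ (Fin d) := WithLp.toLp 2 a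

noncomputable def midp (a b : Fin d → ℝ) : EuclideanSpace ℝ (Fin d) := WithLp.toLp 2 (fun i => (a i + b i) / 2)

def boxO (a b : Fin d → ℝ) : Set (EuclideanSpace ℝ (Fin d)) :=
  {x | ∀ i, x i ∈ Set.Ioo (a i) (b i)}

lemma boxO_subset (a b : Fin d → ℝ) : boxO a b ⊆ box a b :=
  fun x hx i => ⟨(hx i).1.le, (hx i).2.le⟩

lemma mem_trBox {X : Set (EuclideanSpace ℝ (Fin d))} {c x : EuclideanSpace ℝ (Fin d)} :
    x ∈ trBox X c ↔ x - c ∈ X := by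
  constructor
  · rintro ⟨y, hy, rfl⟩; simpa using hy
  · intro h; exact ⟨x - c, h, sub_add_cancel x c⟩

lemma diam_trBox (X : Set (EuclideanSpace ℝ (Fin d))) (c : EuclideanSpace ℝ (Fin d)) :
    diam (trBox X c) = diam X := (isometry_add_right c).diam_image X

lemma dist_sq_sum (x y : EuclideanSpace ℝ (Fin d)) :
    dist x y = Real.sqrt (∑ i, dist (x i) (y i) ^ 2) := EuclideanSpace.dist_eq x y

lemma coord_le_dist (x y : EuclideanSpace ℝ (Fin d)) (i : Fin d) :
    dist (x i) (y i) ≤ dist x y := by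
  rw [dist_sq_sum]
  have h1 : dist (x i) (y i) ^ 2 ≤ ∑ j, dist (x j) (y j) ^ 2 :=
    Finset.single_le_sum (f := fun j => dist (x j) (y j) ^ 2)
      (fun j _ => sq_nonneg _) (Finset.mem_univ i)
  calc dist (x i) (y i) = Real.sqrt (dist (x i) (y i) ^ 2) := (Real.sqrt_sq dist_nonneg).symm
    _ ≤ _ := Real.sqrt_le_sqrt h1

lemma dist_le_of_mem_box {a b : Fin d → ℝ} {x y : EuclideanSpace ℝ (Fin d)}
    (hx : x ∈ box a b) (hy : y ∈ box a b) : dist x y ≤ dist (pt a) (pt b) := by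
  rw [dist_sq_sum, dist_sq_sum]
  apply Real.sqrt_le_sqrt
  apply Finset.sum_le_sum
  intro i _
  obtain ⟨l1, u1⟩ := hx i
  obtain ⟨l2, u2⟩ := hy i
  have h1 : dist (x i) (y i) ≤ b i - a i := by
    rw [Real.dist_eq, abs_le]; constructor <;> linarith
  have h2 : dist (pt a i) (pt b i) = b i - a i := by
    simp only [pt, PiLp.toLp_apply]; rw [Real.dist_eq, abs_sub_comm, abs_of_nonneg (by linarith)]
  rw [h2]
  exact pow_le_pow_left₀ dist_nonneg h1 2

lemma dist_midp_le {a b : Fin d → ℝ} {x : EuclideanSpace ℝ (Fin d)}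
    (hx : x ∈ box a b) : dist x (midp a b) ≤ dist (pt a) (pt b) / 2 := by
  rw [dist_sq_sum, dist_sq_sum]
  have key : ∑ i, dist (x i) (midp a b i) ^ 2 ≤ (∑ i, dist (pt a i) (pt b i) ^ 2) / 4 := by
    rw [Finset.sum_div]
    apply Finset.sum_le_sum
    intro i _
    obtain ⟨l1, u1⟩ := hx i
    have h1 : dist (x i) (midp a b i) ≤ (b i - a i) / 2 := by
      rw [Real.dist_eq, abs_le]
      constructor <;> (simp only [midp, PiLp.toLp_apply]; linarith)
    have h2 : dist (pt a i) (pt b i) = b i - a i := by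
      simp only [pt, PiLp.toLp_apply]; rw [Real.dist_eq, abs_sub_comm, abs_of_nonneg (by linarith)]
    rw [h2]
    calc dist (x i) (midp a b i) ^ 2 ≤ ((b i - a i) / 2) ^ 2 :=
          pow_le_pow_left₀ dist_nonneg h1 2
      _ = (b i - a i) ^ 2 / 4 := by ring
  calc Real.sqrt (∑ i, dist (x i) (midp a b i) ^ 2)
      ≤ Real.sqrt ((∑ i, dist (pt a i) (pt b i) ^ 2) / 4) := Real.sqrt_le_sqrt key
    _ = Real.sqrt (∑ i, dist (pt a i) (pt b i) ^ 2) / 2 := by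
        rw [Real.sqrt_div (Finset.sum_nonneg fun i _ => sq_nonneg _),
          show (4:ℝ) = 2 ^ 2 by norm_num, Real.sqrt_sq (by norm_num : (0:ℝ) ≤ 2)]

lemma isBounded_box (a b : Fin d → ℝ) : Bornology.IsBounded (box a b) := by
  rw [Metric.isBounded_iff]
  exact ⟨dist (pt a) (pt b), fun x hx y hy => dist_le_of_mem_box hx hy⟩

lemma diam_box {a b : Fin d → ℝ} (h : ∀ i, a i ≤ b i) :
    diam (box a b) = dist (pt a) (pt b) := by
  apply le_antisymm
  · exact diam_le_of_forall_dist_le dist_nonneg fun x hx y hy => dist_le_of_mem_box hx hy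
  · exact dist_le_diam_of_mem (isBounded_box a b)
      (fun i => ⟨le_refl _, h i⟩) (fun i => ⟨h i, le_refl _⟩)

lemma vol_box (a b : Fin d → ℝ) :
    volume (box a b) = ∏ i, ENNReal.ofReal (b i - a i) := by
  have hvp := EuclideanSpace.volume_preserving_symm_measurableEquiv_toLp (Fin d)
  have h1 : box a b = (MeasurableEquiv.toLp 2 (Fin d → ℝ)).symm ⁻¹'
      (Set.univ.pi fun i => Set.Icc (a i) (b i)) := by
    ext x; simp only [Set.mem_preimage, Set.mem_univ_pi]; exact Iff.rfl
  rw [h1, hvp.measure_preimage (MeasurableSet.univ_pi fun i => measurableSet_Icc).nullMeasurableSet,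
    volume_pi_pi]
  simp [Real.volume_Icc]

lemma vol_boxO (a b : Fin d → ℝ) :
    volume (boxO a b) = ∏ i, ENNReal.ofReal (b i - a i) := by
  have hvp := EuclideanSpace.volume_preserving_symm_measurableEquiv_toLp (Fin d)
  have h1 : boxO a b = (MeasurableEquiv.toLp 2 (Fin d → ℝ)).symm ⁻¹'
      (Set.univ.pi fun i => Set.Ioo (a i) (b i)) := by
    ext x; simp only [Set.mem_preimage, Set.mem_univ_pi]; exact Iff.rfl
  rw [h1, hvp.measure_preimage (MeasurableSet.univ_pi fun i => measurableSet_Ioo).nullMeasurableSet,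
    volume_pi_pi]
  simp [Real.volume_Ioo]

lemma meas_boxO (a b : Fin d → ℝ) : MeasurableSet (boxO a b) := by
  have h1 : boxO a b = (MeasurableEquiv.toLp 2 (Fin d → ℝ)).symm ⁻¹'
      (Set.univ.pi fun i => Set.Ioo (a i) (b i)) := by
    ext x; simp only [Set.mem_preimage, Set.mem_univ_pi]; exact Iff.rfl
  rw [h1]
  exact (MeasurableEquiv.toLp 2 (Fin d → ℝ)).symm.measurable
    (MeasurableSet.univ_pi fun i => measurableSet_Ioo)

lemma trBox_eq_preimage (X : Set (EuclideanSpace ℝ (Fin d))) (c : EuclideanSpace ℝ (Fin d)) :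
    trBox X c = (fun x => x - c) ⁻¹' X := by
  ext x; exact mem_trBox

lemma vol_trBox (X : Set (EuclideanSpace ℝ (Fin d))) (hX : NullMeasurableSet X volume)
    (c : EuclideanSpace ℝ (Fin d)) : volume (trBox X c) = volume X := by
  rw [trBox_eq_preimage]
  exact (measurePreserving_sub_right volume c).measure_preimage hX

lemma meas_trBox (X : Set (EuclideanSpace ℝ (Fin d))) (hX : MeasurableSet X)
    (c : EuclideanSpace ℝ (Fin d)) : MeasurableSet (trBox X c) := by
  rw [trBox_eq_preimage]
  exact hX.preimage (measurable_id.sub_const c)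

lemma disjO {a b : Fin d → ℝ} (hab : ∀ i, a i < b i) {δ : Fin d → ℝ}
    (hδ : ∀ i, δ i = b i - a i) {q q' : Fin d → ℤ} (hqq : q ≠ q') :
    Disjoint (trBox (boxO a b) (mvec δ q)) (trBox (boxO a b) (mvec δ q')) := by
  rw [Set.disjoint_left]
  rintro x hx hx'
  rw [mem_trBox] at hx hx'
  obtain ⟨i, hi⟩ := Function.ne_iff.mp hqq
  have h1 := hx i
  have h2 := hx' i
  simp only [boxO, Set.mem_setOf_eq, Set.mem_Ioo] at h1 h2
  have e1 : (x - mvec δ q) i = x i - δ i * (q i : ℝ) := rfl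
  have e2 : (x - mvec δ q') i = x i - δ i * (q' i : ℝ) := rfl
  rw [e1] at h1
  rw [e2] at h2
  have hδi := hδ i
  have habi := hab i
  rcases lt_or_gt_of_ne hi with h | h
  · have : ((q i : ℝ) + 1) ≤ (q' i : ℝ) := by exact_mod_cast h
    nlinarith [h1.1, h1.2, h2.1, h2.2]
  · have : ((q' i : ℝ) + 1) ≤ (q i : ℝ) := by exact_mod_cast h
    nlinarith [h1.1, h1.2, h2.1, h2.2]

end StmtAux

open StmtAux in
theorem stmt1 (d : ℕ) (hd : 1 ≤ d)
    (a b : Fin d → ℝ) (hab : ∀ i, a i < b i)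
    (δ : Fin d → ℝ) (hδ : ∀ i, δ i = b i - a i)
    (aB bB aC bC : Fin d → ℝ)
    (hrB : box a b ⊆ box aB bB) (hrC : box a b ⊆ box aC bC)
    (η Cbb Cdv : ℝ) (hη : 0 < η) (hCbb : 1 ≤ Cbb) (hCdv : 1 < Cdv)
    (hB : diam (box aB bB) ≤ Cbb * diam (box a b))
    (hC : diam (box aC bC) ≤ Cbb * diam (box a b))
    (hdv : diam (box a b) ^ d ≤ Cdv * (volume (box a b)).toReal)
    (ω : ℝ) (hω : ω = (volume (ball (0 : EuclideanSpace ℝ (Fin d)) 1)).toReal)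
    (Csp : ℝ) (hCsp : Csp = ((2 : ℝ) ^ d)⁻¹ * (3 + 2 * η⁻¹) ^ d * Cbb ^ d * ω * Cdv)
    (p : Fin d → ℤ) :
    {q : Fin d → ℤ |
        η * setDist (trBox (box aB bB) (mvec δ p)) (trBox (box aC bC) (mvec δ q)) <
          max (diam (trBox (box aB bB) (mvec δ p)))
            (diam (trBox (box aC bC) (mvec δ q)))}.Finite ∧
      (Nat.card {q : Fin d → ℤ |
          η * setDist (trBox (box aB bB) (mvec δ p)) (trBox (box aC bC) (mvec δ q)) <
            max (diam (trBox (box aB bB) (mvec δ p)))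
              (diam (trBox (box aC bC) (mvec δ q)))} : ℝ) ≤ Csp := by
  classical
  set S : Set (Fin d → ℤ) := {q : Fin d → ℤ |
      η * setDist (trBox (box aB bB) (mvec δ p)) (trBox (box aC bC) (mvec δ q)) <
        max (diam (trBox (box aB bB) (mvec δ p)))
          (diam (trBox (box aC bC) (mvec δ q)))} with hS
  -- basic facts
  have hab' : ∀ i, a i ≤ b i := fun i => (hab i).le
  have ha_mem : pt a ∈ box a b := fun i => ⟨le_refl _, hab' i⟩
  have haB : ∀ i, aB i ≤ bB i := fun i => le_trans (hrB ha_mem i).1 (hrB ha_mem i).2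
  have haC : ∀ i, aC i ≤ bC i := fun i => le_trans (hrC ha_mem i).1 (hrC ha_mem i).2
  set D : ℝ := diam (box a b) with hD
  set M : ℝ := max (diam (box aB bB)) (diam (box aC bC)) with hM
  have hM0 : 0 ≤ M := le_trans diam_nonneg (le_max_left _ _)
  set ρ : ℝ := (3 / 2 + η⁻¹) * M with hρ
  have hρ0 : 0 ≤ ρ := mul_nonneg (by positivity) hM0
  set m : EuclideanSpace ℝ (Fin d) := midp aB bB + mvec δ p with hm
  -- D positive
  have i0 : Fin d := ⟨0, hd⟩
  have hDpos : 0 < D := by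
    have h1 : dist (a i0) (b i0) ≤ dist (pt a) (pt b) := coord_le_dist (pt a) (pt b) i0
    have h2 : 0 < dist (a i0) (b i0) := dist_pos.mpr (ne_of_lt (hab i0))
    rw [hD, diam_box hab']
    linarith
  -- each inadmissible open box is inside the ball
  have hsub : ∀ q ∈ S, trBox (boxO a b) (mvec δ q) ⊆ closedBall m ρ := by
    intro q hq z hz
    rw [hS, Set.mem_setOf_eq, diam_trBox, diam_trBox] at hq
    have hsd : setDist (trBox (box aB bB) (mvec δ p)) (trBox (box aC bC) (mvec δ q)) < η⁻¹ * M := by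
      rw [inv_mul_eq_div, lt_div_iff₀ hη, mul_comm]
      exact hq
    -- extract a close pair
    have hne : {r | ∃ x ∈ trBox (box aB bB) (mvec δ p), ∃ y ∈ trBox (box aC bC) (mvec δ q),
        r = dist x y}.Nonempty := by
      exact ⟨dist (pt a + mvec δ p) (pt a + mvec δ q), pt a + mvec δ p,
        Set.mem_image_of_mem _ (hrB ha_mem), pt a + mvec δ q,
        Set.mem_image_of_mem _ (hrC ha_mem), rfl⟩
    have hbdd : BddBelow {r | ∃ x ∈ trBox (box aB bB) (mvec δ p),
        ∃ y ∈ trBox (box aC bC) (mvec δ q), r = dist x y} := by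
      refine ⟨0, ?_⟩
      rintro r ⟨x, _, y, _, rfl⟩
      exact dist_nonneg
    rw [setDist] at hsd
    obtain ⟨r, ⟨x, hx, y, hy, rfl⟩, hr⟩ := (csInf_lt_iff hbdd hne).mp hsd
    -- z ∈ C_q
    have hzC : z ∈ trBox (box aC bC) (mvec δ q) := by
      rw [mem_trBox]
      exact hrC (boxO_subset a b (mem_trBox.mp hz))
    -- distances
    have d1 : dist z y ≤ M := by
      have h1 : dist z y = dist (z - mvec δ q) (y - mvec δ q) := (dist_sub_right z y _).symm
      rw [h1]
      calc dist (z - mvec δ q) (y - mvec δ q) ≤ dist (pt aC) (pt bC) :=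
            dist_le_of_mem_box (mem_trBox.mp hzC) (mem_trBox.mp hy)
        _ = diam (box aC bC) := (diam_box haC).symm
        _ ≤ M := le_max_right _ _
    have d2 : dist x m ≤ M / 2 := by
      have h1 : dist x m = dist (x - mvec δ p) (midp aB bB) := by
        rw [hm, ← dist_sub_right x (midp aB bB + mvec δ p) (mvec δ p)]
        congr 1
        abel
      rw [h1]
      calc dist (x - mvec δ p) (midp aB bB) ≤ dist (pt aB) (pt bB) / 2 :=
            dist_midp_le (mem_trBox.mp hx)
        _ = diam (box aB bB) / 2 := by rw [diam_box haB]
        _ ≤ M / 2 := by have := le_max_left (diam (box aB bB)) (diam (box aC bC)); linarith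
    have := dist_triangle z y m
    have := dist_triangle y x m
    have hd3 : dist y x < η⁻¹ * M := by rw [dist_comm]; exact hr
    rw [mem_closedBall, hρ]
    calc dist z m ≤ dist z y + dist y m := dist_triangle z y m
      _ ≤ dist z y + (dist y x + dist x m) := by linarith [dist_triangle y x m]
      _ ≤ M + (η⁻¹ * M + M / 2) := by linarith
      _ = (3 / 2 + η⁻¹) * M := by ring
  -- volume of the small box
  set V := volume (box a b) with hV
  have hVO : volume (boxO a b) = V := by rw [vol_boxO, hV, vol_box]
  have hVr : 0 < V.toReal := by
    by_contra h
    push_neg at h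
    have : D ^ d ≤ 0 := le_trans hdv (by nlinarith)
    nlinarith [pow_pos hDpos d]
  have hVne : V ≠ 0 := by
    intro h; rw [hV] at *; rw [h] at hVr; simp at hVr
  have hVtop : V ≠ ⊤ := by
    intro h; rw [h] at hVr; simp at hVr
  -- key counting bound
  have hball : volume (closedBall m ρ) =
      ENNReal.ofReal (ρ ^ d) * volume (ball (0 : EuclideanSpace ℝ (Fin d)) 1) := by
    rw [Measure.addHaar_closedBall volume m hρ0, finrank_euclideanSpace, Fintype.card_fin]
  have key : ∀ F : Finset (Fin d → ℤ), ↑F ⊆ S →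
      (F.card : ℝ≥0∞) * V ≤ ENNReal.ofReal (ρ ^ d) *
        volume (ball (0 : EuclideanSpace ℝ (Fin d)) 1) := by
    intro F hF
    have hdisj : (↑F : Set (Fin d → ℤ)).PairwiseDisjoint
        (fun q => trBox (boxO a b) (mvec δ q)) := by
      intro q _ q' _ hqq
      exact disjO hab hδ hqq
    have hmeas : ∀ q ∈ F, MeasurableSet (trBox (boxO a b) (mvec δ q)) :=
      fun q _ => meas_trBox _ (meas_boxO a b) _
    have h1 : volume (⋃ q ∈ F, trBox (boxO a b) (mvec δ q)) =
        ∑ q ∈ F, volume (trBox (boxO a b) (mvec δ q)) :=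
      measure_biUnion_finset hdisj hmeas
    have h2 : ∀ q ∈ F, volume (trBox (boxO a b) (mvec δ q)) = V := by
      intro q _
      rw [vol_trBox _ (meas_boxO a b).nullMeasurableSet, hVO]
    rw [Finset.sum_congr rfl h2, Finset.sum_const, nsmul_eq_mul] at h1
    have h3 : (⋃ q ∈ F, trBox (boxO a b) (mvec δ q)) ⊆ closedBall m ρ :=
      Set.iUnion₂_subset fun q hq => hsub q (hF hq)
    calc (F.card : ℝ≥0∞) * V = volume (⋃ q ∈ F, trBox (boxO a b) (mvec δ q)) := h1.symm
      _ ≤ volume (closedBall m ρ) := measure_mono h3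
      _ = _ := hball
  -- real version
  have hballtop : ENNReal.ofReal (ρ ^ d) *
      volume (ball (0 : EuclideanSpace ℝ (Fin d)) 1) ≠ ⊤ :=
    ENNReal.mul_ne_top ENNReal.ofReal_ne_top measure_ball_lt_top.ne
  have keyR : ∀ F : Finset (Fin d → ℤ), ↑F ⊆ S → (F.card : ℝ) * V.toReal ≤ ρ ^ d * ω := by
    intro F hF
    have := ENNReal.toReal_mono hballtop (key F hF)
    rw [ENNReal.toReal_mul, ENNReal.toReal_mul, ENNReal.toReal_natCast,
      ENNReal.toReal_ofReal (pow_nonneg hρ0 d)] at this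
    rw [hω]
    exact this
  -- cardinality bound as real for any admissible finset
  have keyN : ∀ F : Finset (Fin d → ℤ), ↑F ⊆ S → (F.card : ℝ) ≤ ρ ^ d * ω / V.toReal := by
    intro F hF
    rw [le_div_iff₀ hVr]
    exact keyR F hF
  -- finiteness
  have hfin : S.Finite := by
    by_contra hinf
    have hinf2 : S.Infinite := hinf
    obtain ⟨F, hFS, hFcard⟩ := hinf2.exists_subset_card_eq (⌈ρ ^ d * ω / V.toReal⌉₊ + 1)
    have h1 := keyN F hFS
    rw [hFcard] at h1
    have h2 : (⌈ρ ^ d * ω / V.toReal⌉₊ : ℝ) < (⌈ρ ^ d * ω / V.toReal⌉₊ + 1 : ℕ) := by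
      push_cast; linarith
    linarith [Nat.le_ceil (ρ ^ d * ω / V.toReal)]
  refine ⟨hfin, ?_⟩
  -- final bound
  have hcard : (Nat.card S : ℝ) = (hfin.toFinset.card : ℝ) := by
    rw [Nat.card_coe_set_eq, Set.ncard_eq_toFinset_card _ hfin]
  have hN := keyR hfin.toFinset (by simp)
  set N : ℝ := (hfin.toFinset.card : ℝ) with hNdef
  -- arithmetic
  have hMD : M ≤ Cbb * D := max_le hB hC
  have hA : ρ ≤ ((3 / 2 + η⁻¹) * Cbb) * D := by
    rw [hρ]
    have h1 : 0 ≤ 3 / 2 + η⁻¹ := by positivity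
    calc (3 / 2 + η⁻¹) * M ≤ (3 / 2 + η⁻¹) * (Cbb * D) := by
          exact mul_le_mul_of_nonneg_left hMD h1
      _ = ((3 / 2 + η⁻¹) * Cbb) * D := by ring
  have hApos : 0 ≤ (3 / 2 + η⁻¹) * Cbb := by positivity
  have hρpow : ρ ^ d ≤ ((3 / 2 + η⁻¹) * Cbb) ^ d * D ^ d := by
    calc ρ ^ d ≤ (((3 / 2 + η⁻¹) * Cbb) * D) ^ d := pow_le_pow_left₀ hρ0 hA d
      _ = _ := mul_pow _ _ _
  have hω0 : 0 ≤ ω := by rw [hω]; exact ENNReal.toReal_nonneg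
  have hCsp' : Csp = ((3 / 2 + η⁻¹) * Cbb) ^ d * ω * Cdv := by
    have e1 : (3 / 2 + η⁻¹) * Cbb = (3 + 2 * η⁻¹) * 2⁻¹ * Cbb := by ring
    rw [hCsp, e1, mul_pow, mul_pow, inv_pow]
    ring
  have hDd : 0 < D ^ d := pow_pos hDpos d
  have hfinal : N ≤ Csp := by
    rw [hCsp']
    have h1 : N * D ^ d ≤ N * (Cdv * V.toReal) :=
      mul_le_mul_of_nonneg_left hdv (by rw [hNdef]; positivity)
    have h2 : Cdv * (N * V.toReal) ≤ Cdv * (ρ ^ d * ω) :=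
      mul_le_mul_of_nonneg_left hN (by linarith)
    have h3 : Cdv * (ρ ^ d * ω) ≤ Cdv * (((3 / 2 + η⁻¹) * Cbb) ^ d * D ^ d * ω) := by
      apply mul_le_mul_of_nonneg_left _ (by linarith)
      exact mul_le_mul_of_nonneg_right hρpow hω0
    have h4 : N * D ^ d ≤ (((3 / 2 + η⁻¹) * Cbb) ^ d * ω * Cdv) * D ^ d := by nlinarith
    exact le_of_mul_le_mul_right h4 hDd
  calc (Nat.card S : ℝ) = N := hcard
    _ ≤ Csp := hfinal
end

section
/- Let $\Gamma$ be a measurable surface with finite area $|\Gamma|$, let $\ell \geq 0$, and let $T^{(\ell)}$ be a finite family of boxes on level $\ell$, all translates of a reference box $r^{(\ell)}$ by integer multiples of its side lengths, such that the set of points of $\Gamma$ lying in more than two boxes of $T^{(\ell)}$ has surface measure zero. Let $C_{da} > 0$ and define $T_{C_{da}}^{(\ell)} := \{t \in T^{(\ell)} : \mathrm{diam}(t)^{d-1} \leq C_{da} |t \cap \Gamma|\}$, where $|X|$ denotes the surface measure of $X \subseteq \Gamma$. Then $|T_{C_{da}}^{(\ell)}| \leq 2 C_{da} |\Gamma|\,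 \mathrm{diam}(r^{(\ell)})^{-(d-1)}$. -/
open MeasureTheory Metric
open scoped ENNReal

open scoped Classical in
/-- Auxiliary: if the set of points in more than two of the `t p` has measure zero,
then the sum of measures of the `t p` over any subfamily is at most `2 μ univ`. -/
theorem aux_sum_stmt5 {α ι : Type*} [MeasurableSpace α] (μ : Measure α) (P : Finset ι)
    (t : ι → Set α) (htm : ∀ p, MeasurableSet (t p))
    (hN : μ {x | 2 < (P.filter fun p => x ∈ t p).card} = 0)
    (P' : Finset ι) (hP' : P' ⊆ P) :
    ∑ p ∈ P', μ (t p) ≤ 2 * μ Set.univ := by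
  set N : Set α := {x | 2 < (P.filter fun p => x ∈ t p).card} with hNdef
  have hNmeas : MeasurableSet N := by
    have hEq : N = ⋃ S ∈ P.powersetCard 3, ⋂ p ∈ S, t p := by
      ext x
      simp only [hNdef, Set.mem_setOf_eq, Set.mem_iUnion, Set.mem_iInter,
        Finset.mem_powersetCard]
      constructor
      · intro hx
        obtain ⟨S, hS, hcard⟩ := Finset.exists_subset_card_eq hx
        exact ⟨S, ⟨hS.trans (Finset.filter_subset _ _), hcard⟩,
          fun p hp => (Finset.mem_filter.1 (hS hp)).2⟩
      · rintro ⟨S, ⟨hSP, hcard⟩, hx⟩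
        have : S ⊆ P.filter fun p => x ∈ t p :=
          fun p hp => Finset.mem_filter.2 ⟨hSP hp, hx p hp⟩
        have := Finset.card_le_card this
        omega
    rw [hEq]
    exact (P.powersetCard 3).measurableSet_biUnion fun S _ =>
      S.measurableSet_biInter fun p _ => htm p
  have key : ∀ x, (∑ p ∈ P', (t p ∩ Nᶜ).indicator (1 : α → ℝ≥0∞) x) ≤ 2 := by
    intro x
    by_cases hx : x ∈ N
    · have h0 : ∀ p ∈ P', (t p ∩ Nᶜ).indicator (1 : α → ℝ≥0∞) x = 0 := fun p _ =>
        Set.indicator_of_notMem (fun h => h.2 hx) _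
      rw [Finset.sum_congr rfl h0]
      simp
    · have h1 : ∀ p ∈ P', (t p ∩ Nᶜ).indicator (1 : α → ℝ≥0∞) x
          = if x ∈ t p then 1 else 0 := by
        intro p _
        by_cases h : x ∈ t p <;> simp [Set.indicator_apply, h, hx]
      rw [Finset.sum_congr rfl h1, Finset.sum_boole]
      have hc : (P'.filter fun p => x ∈ t p).card ≤ (P.filter fun p => x ∈ t p).card :=
        Finset.card_le_card (Finset.filter_subset_filter _ hP')
      have hx2 : (P.filter fun p => x ∈ t p).card ≤ 2 := by
        simpa [hNdef] using hx
      exact_mod_cast hc.trans hx2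
  calc ∑ p ∈ P', μ (t p)
      ≤ ∑ p ∈ P', μ (t p ∩ Nᶜ) := by
        refine Finset.sum_le_sum fun p _ => ?_
        calc μ (t p) ≤ μ (t p ∩ Nᶜ) + μ (t p \ Nᶜ) := measure_le_inter_add_diff μ _ _
          _ ≤ μ (t p ∩ Nᶜ) + μ N := by
              gcongr
              exact fun x hx => by simpa using hx.2
          _ = μ (t p ∩ Nᶜ) := by rw [hN, add_zero]
    _ = ∑ p ∈ P', ∫⁻ x, (t p ∩ Nᶜ).indicator 1 x ∂μ := by
        refine Finset.sum_congr rfl fun p _ => ?_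
        rw [lintegral_indicator_one ((htm p).inter hNmeas.compl)]
    _ = ∫⁻ x, ∑ p ∈ P', (t p ∩ Nᶜ).indicator 1 x ∂μ :=
        (lintegral_finset_sum _ fun p _ =>
          (measurable_one.indicator ((htm p).inter hNmeas.compl))).symm
    _ ≤ ∫⁻ _, 2 ∂μ := lintegral_mono key
    _ = 2 * μ Set.univ := lintegral_const 2

open scoped Classical in
/-- The number of level-`ℓ` boxes `t` with `diam(t)^{d-1} ≤ C_da |t ∩ Γ|` is
bounded by `2 C_da |Γ| diam(r^{(ℓ)})^{-(d-1)}`, provided the set of points of `Γ` lying in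
more than two boxes has surface measure zero. -/
theorem stmt5 (d : ℕ) (hd : 1 ≤ d)
    (a b : Fin d → ℝ) (hab : ∀ i, a i < b i)
    (δ : Fin d → ℝ) (hδ : ∀ i, δ i = b i - a i)
    (Γ : Set (EuclideanSpace ℝ (Fin d))) (μ : Measure (EuclideanSpace ℝ (Fin d)))
    (hμΓ : μ Γ < ⊤) (hμsupp : ∀ X : Set (EuclideanSpace ℝ (Fin d)), μ X = μ (X ∩ Γ))
    (P : Finset (Fin d → ℤ))
    (hover : μ {x ∈ Γ | 2 < (P.filter fun p => x ∈ trBox (box a b) (mvec δ p)).card} = 0)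
    (Cda : ℝ) (hCda : 0 < Cda) :
    ((P.filter fun p =>
          diam (trBox (box a b) (mvec δ p)) ^ (d - 1) ≤
            Cda * (μ (trBox (box a b) (mvec δ p) ∩ Γ)).toReal).card : ℝ) ≤
      2 * Cda * (μ Γ).toReal / diam (box a b) ^ (d - 1) := by
  classical
  -- the box is closed
  have hclosed : IsClosed (box a b) := by
    have hEq : box a b
        = ⋂ i, (fun x : EuclideanSpace ℝ (Fin d) => x i) ⁻¹' Set.Icc (a i) (b i) := by
      ext x; simp [box, Set.mem_iInter]
    rw [hEq]
    exact isClosed_iInter fun i => IsClosed.preimage (PiLp.continuous_apply 2 _ i) isClosed_Icc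
  -- translates are measurable
  have htrEq : ∀ c : EuclideanSpace ℝ (Fin d),
      trBox (box a b) c = (fun x : EuclideanSpace ℝ (Fin d) => x - c) ⁻¹' box a b := by
    intro c; ext y
    constructor
    · rintro ⟨x, hx, rfl⟩; simpa [add_sub_cancel_right] using hx
    · intro h; exact ⟨y - c, h, by simp⟩
  have htm : ∀ c, MeasurableSet (trBox (box a b) c) := by
    intro c
    rw [htrEq]
    exact hclosed.measurableSet.preimage (measurable_id.sub measurable_const)
  -- the box is bounded
  have hbdd : Bornology.IsBounded (box a b) := by
    have hsub : box a b ⊆ Metric.closedBall (WithLp.toLp 2 a : EuclideanSpace ℝ (Fin d))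
        (dist (WithLp.toLp 2 b : EuclideanSpace ℝ (Fin d)) (WithLp.toLp 2 a : EuclideanSpace ℝ (Fin d))) := by
      intro x hx
      rw [Metric.mem_closedBall, EuclideanSpace.dist_eq, EuclideanSpace.dist_eq]
      refine Real.sqrt_le_sqrt (Finset.sum_le_sum fun i _ => ?_)
      have h1 := (hx i).1
      have h2 := (hx i).2
      have hxa : dist (x i) (a i) ≤ dist (b i) (a i) := by
        rw [Real.dist_eq, Real.dist_eq, abs_of_nonneg (by linarith),
          abs_of_nonneg (by linarith [hab i])]
        linarith
      exact pow_le_pow_left₀ dist_nonneg hxa 2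
    exact (Metric.isBounded_closedBall).subset hsub
  have ha : (WithLp.toLp 2 a : EuclideanSpace ℝ (Fin d)) ∈ box a b :=
    fun i => ⟨le_refl _, (hab i).le⟩
  have hb : (WithLp.toLp 2 b : EuclideanSpace ℝ (Fin d)) ∈ box a b :=
    fun i => ⟨(hab i).le, le_refl _⟩
  -- the diameter is positive
  have hD : 0 < diam (box a b) := by
    have hne : (WithLp.toLp 2 a : EuclideanSpace ℝ (Fin d))
        ≠ (WithLp.toLp 2 b : EuclideanSpace ℝ (Fin d)) := by
      intro h
      have h0 : a ⟨0, hd⟩ = b ⟨0, hd⟩ := congrArg (fun v => v ⟨0, hd⟩) h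
      linarith [hab ⟨0, hd⟩]
    exact lt_of_lt_of_le (dist_pos.2 hne) (dist_le_diam_of_mem hbdd ha hb)
  -- translates have the same diameter
  have hdiam : ∀ c : EuclideanSpace ℝ (Fin d), diam (trBox (box a b) c) = diam (box a b) :=
    fun c => (isometry_add_right c).diam_image _
  set T : (Fin d → ℤ) → Set (EuclideanSpace ℝ (Fin d)) :=
    fun p => trBox (box a b) (mvec δ p) with hT
  set P' : Finset (Fin d → ℤ) := P.filter fun p =>
    diam (trBox (box a b) (mvec δ p)) ^ (d - 1) ≤
      Cda * (μ (trBox (box a b) (mvec δ p) ∩ Γ)).toReal with hP'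
  -- the bad overlap set has measure zero
  have hN0 : μ {x | 2 < (P.filter fun p => x ∈ T p).card} = 0 := by
    rw [hμsupp]
    rw [show {x | 2 < (P.filter fun p => x ∈ T p).card} ∩ Γ
        = {x ∈ Γ | 2 < (P.filter fun p => x ∈ trBox (box a b) (mvec δ p)).card} by
      ext x; simp [hT, and_comm]]
    exact hover
  -- the key sum bound
  have hsum : ∑ p ∈ P', μ (T p) ≤ 2 * μ Set.univ :=
    aux_sum_stmt5 μ P T (fun p => htm _) hN0 P' (Finset.filter_subset _ _)
  have huniv : μ Set.univ = μ Γ := by rw [hμsupp Set.univ, Set.univ_inter]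
  have hsum2 : ∑ p ∈ P', μ (T p ∩ Γ) ≤ 2 * μ Γ := by
    calc ∑ p ∈ P', μ (T p ∩ Γ) = ∑ p ∈ P', μ (T p) :=
          Finset.sum_congr rfl fun p _ => (hμsupp (T p)).symm
      _ ≤ 2 * μ Set.univ := hsum
      _ = 2 * μ Γ := by rw [huniv]
  have hfin : ∀ p ∈ P', μ (T p ∩ Γ) ≠ ⊤ := fun p _ =>
    (lt_of_le_of_lt (measure_mono Set.inter_subset_right) hμΓ).ne
  have hsumR : ∑ p ∈ P', (μ (T p ∩ Γ)).toReal ≤ 2 * (μ Γ).toReal := by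
    rw [← ENNReal.toReal_sum hfin]
    have h2 : (2 : ℝ≥0∞) * μ Γ ≠ ⊤ := ENNReal.mul_ne_top (by simp) hμΓ.ne
    have := ENNReal.toReal_mono h2 hsum2
    simpa [ENNReal.toReal_mul] using this
  have hlower : (P'.card : ℝ) * diam (box a b) ^ (d - 1)
      ≤ ∑ p ∈ P', Cda * (μ (T p ∩ Γ)).toReal := by
    have := Finset.card_nsmul_le_sum P' (fun p => Cda * (μ (T p ∩ Γ)).toReal)
      (diam (box a b) ^ (d - 1)) (fun p hp => by
        have h := (Finset.mem_filter.1 hp).2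
        rwa [hdiam] at h)
    simpa [nsmul_eq_mul] using this
  have hmain : (P'.card : ℝ) * diam (box a b) ^ (d - 1) ≤ 2 * Cda * (μ Γ).toReal := by
    calc (P'.card : ℝ) * diam (box a b) ^ (d - 1)
        ≤ ∑ p ∈ P', Cda * (μ (T p ∩ Γ)).toReal := hlower
      _ = Cda * ∑ p ∈ P', (μ (T p ∩ Γ)).toReal := by rw [Finset.mul_sum]
      _ ≤ Cda * (2 * (μ Γ).toReal) := by
          exact mul_le_mul_of_nonneg_left hsumR hCda.le
      _ = 2 * Cda * (μ Γ).toReal := by ring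
  rw [le_div_iff₀ (pow_pos hD _)]
  exact hmain
end

section
/- Let $d \geq 2$, and let a cluster tree $T_I$ of boxes with maximal level $\ell_{max} \in d\cdot\mathbb{N}$ satisfy $|T_I^{(\ell)}| \leq C_{nb}\, \mathrm{diam}(r^{(\ell)})^{-(d-1)}$ on every level $\ell$, where the reference box diameters satisfy $\mathrm{diam}(r^{(\ell+d)}) = \tfrac{1}{2}\mathrm{diam}(r^{(\ell)})$ and are non-increasing in $\ell$. Suppose furthermore $\ell_{max} \leq \tfrac{d}{d-1}(\log_2 |I| - \log_2(C_{rk} k)) + d$. Then the total number of nodes satisfies $|T_I| < C_{nb}\, d\, \mathrm{diam}(r^{(0)})^{-(d-1)}\, (2^{d-1}+2)\, C_{rk}^{-1} k^{-1} |I|$, i.e. $|T_I| \in \mathcal{O}(|I|/k)$. -/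
/-- The total number of nodes of the cluster tree is bounded by
`C_nb d diam(r^{(0)})^{-(d-1)} (2^{d-1}+2) C_rk⁻¹ k⁻¹ |I|`. -/
theorem stmt16 (d k nI : ℕ) (hd : 2 ≤ d) (hk : 1 ≤ k) (hnI : 1 ≤ nI)
    (Cnb Crk : ℝ) (hCnb : 0 < Cnb) (hCrk : 0 < Crk)
    (lmax m : ℕ) (hlm : lmax = d * m)
    (a : ℕ → ℝ) (hpos : ∀ ℓ, 0 < a ℓ)
    (hhalf : ∀ ℓ, a (ℓ + d) = a ℓ / 2)
    (hmono : ∀ ℓ, a (ℓ + 1) ≤ a ℓ)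
    (N : ℕ → ℕ)
    (hN : ∀ ℓ ≤ lmax, (N ℓ : ℝ) ≤ Cnb * (a ℓ ^ (d - 1))⁻¹)
    (hlmax : (lmax : ℝ) ≤
      (d : ℝ) / ((d : ℝ) - 1) * (Real.logb 2 nI - Real.logb 2 (Crk * k)) + d) :
    ((∑ ℓ ∈ Finset.range (lmax + 1), N ℓ : ℕ) : ℝ) <
      Cnb * d * (a 0 ^ (d - 1))⁻¹ * ((2 : ℝ) ^ (d - 1) + 2) * Crk⁻¹ * (k : ℝ)⁻¹ * nI := by
  have hd0 : 0 < d := by omega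
  set x : ℝ := (2:ℝ)^(d-1) with hxdef
  have hx2 : (2:ℝ) ≤ x := by
    calc (2:ℝ) = 2^1 := (pow_one 2).symm
    _ ≤ 2^(d-1) := pow_le_pow_right₀ (by norm_num) (by omega)
  have hx1 : (1:ℝ) < x := lt_of_lt_of_le one_lt_two hx2
  have ha0 : 0 < a 0 := hpos 0
  have hA : 0 < (a 0 ^ (d-1))⁻¹ := by positivity
  set A : ℝ := (a 0 ^ (d-1))⁻¹ with hAdef
  -- value of a at multiples of d
  have hmul : ∀ j, a (j*d) = a 0 / 2^j := by
    intro j; induction j with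
    | zero => simp
    | succ n ih =>
      have h1 : (n+1)*d = n*d + d := by ring
      rw [h1, hhalf, ih]
      rw [div_div, ← pow_succ]
  -- antitone
  have hanti : ∀ i j : ℕ, i ≤ j → a j ≤ a i := by
    intro i j hij
    induction j with
    | zero => have : i = 0 := by omega
              simp [this]
    | succ n ih =>
      rcases Nat.lt_or_ge i (n+1) with h | h
      · exact le_trans (hmono n) (ih (by omega))
      · have : i = n+1 := by omega
        simp [this]
  have hlow : ∀ j ℓ : ℕ, ℓ ≤ j*d → a 0 / 2^j ≤ a ℓ := by
    intro j ℓ h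
    rw [← hmul j]; exact hanti ℓ (j*d) h
  -- inverse power bound
  have hinv : ∀ j ℓ : ℕ, ℓ ≤ j*d → (a ℓ ^ (d-1))⁻¹ ≤ A * x^j := by
    intro j ℓ h
    have hlo := hlow j ℓ h
    have hq : (0:ℝ) < a 0 / 2^j := by positivity
    have hp1 : (a 0 / 2^j)^(d-1) ≤ a ℓ ^ (d-1) := pow_le_pow_left₀ hq.le hlo _
    have hp0 : (0:ℝ) < (a 0 / 2^j)^(d-1) := by positivity
    have h2 : (a ℓ ^ (d-1))⁻¹ ≤ ((a 0 / 2^j)^(d-1))⁻¹ :=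
      inv_anti₀ hp0 hp1
    have e : ((a 0 / 2^j)^(d-1))⁻¹ = A * x^j := by
      have hxx : ((2:ℝ)^j)^(d-1) = x^j := by
        rw [hxdef, ← pow_mul, ← pow_mul, Nat.mul_comm]
      rw [div_pow, hxx, inv_div, div_eq_inv_mul, hAdef]
    rw [e] at h2; exact h2
  -- sum bound by induction, grouping levels in blocks of d
  have key : ∀ n : ℕ, d*n ≤ lmax →
      (∑ ℓ ∈ Finset.range (d*n+1), (N ℓ:ℝ)) ≤
        Cnb * A * (1 + d * ∑ j ∈ Finset.range n, x^(j+1)) := by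
    intro n
    induction n with
    | zero =>
      intro _
      have h0 := hN 0 (by omega)
      simpa using h0
    | succ n ih =>
      intro hle
      have hstep : d*n ≤ d*(n+1) := Nat.mul_le_mul_left d (Nat.le_succ n)
      have hle' : d*n ≤ lmax := le_trans hstep hle
      have hsplit : d*(n+1)+1 = (d*n+1) + d := by ring
      rw [hsplit, Finset.sum_range_add]
      have htail : ∀ i ∈ Finset.range d,
          (N (d*n+1+i) : ℝ) ≤ Cnb * (A * x^(n+1)) := by
        intro i hi
        have hi' : i < d := Finset.mem_range.mp hi
        have hℓ : d*n+1+i ≤ lmax := by omega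
        have hℓ2 : d*n+1+i ≤ (n+1)*d := by
          have : (n+1)*d = d*n + d := by ring
          omega
        calc (N (d*n+1+i) : ℝ) ≤ Cnb * (a (d*n+1+i) ^ (d-1))⁻¹ := hN _ hℓ
        _ ≤ Cnb * (A * x^(n+1)) :=
            mul_le_mul_of_nonneg_left (hinv (n+1) _ hℓ2) hCnb.le
      have htail2 : (∑ i ∈ Finset.range d, (N (d*n+1+i) : ℝ)) ≤
          d * (Cnb * (A * x^(n+1))) := by
        calc (∑ i ∈ Finset.range d, (N (d*n+1+i) : ℝ))
            ≤ ∑ _i ∈ Finset.range d, Cnb * (A * x^(n+1)) :=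
              Finset.sum_le_sum htail
        _ = d * (Cnb * (A * x^(n+1))) := by
              rw [Finset.sum_const, Finset.card_range, nsmul_eq_mul]
      have hih := ih hle'
      calc (∑ ℓ ∈ Finset.range (d*n+1), (N ℓ:ℝ)) +
            (∑ i ∈ Finset.range d, (N (d*n+1+i) : ℝ))
          ≤ Cnb * A * (1 + d * ∑ j ∈ Finset.range n, x^(j+1)) +
            d * (Cnb * (A * x^(n+1))) := add_le_add hih htail2
        _ = Cnb * A * (1 + d * ((∑ j ∈ Finset.range n, x^(j+1)) + x^(n+1))) := by
              ring
        _ = Cnb * A * (1 + d * ∑ j ∈ Finset.range (n+1), x^(j+1)) := by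
              rw [Finset.sum_range_succ]
  -- the fraction B = nI / (Crk k)
  set B : ℝ := (nI:ℝ) / (Crk * k) with hBdef
  have hnIpos : (0:ℝ) < nI := by exact_mod_cast hnI
  have hkpos : (0:ℝ) < k := by exact_mod_cast hk
  have hCk : (0:ℝ) < Crk * k := mul_pos hCrk hkpos
  have hB : 0 < B := div_pos hnIpos hCk
  -- bound x^m ≤ x * B from hlmax
  have hDpos : (0:ℝ) < d := by exact_mod_cast hd0
  have hd2 : (2:ℝ) ≤ d := by exact_mod_cast hd
  have hD1 : (0:ℝ) < (d:ℝ) - 1 := by linarith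
  set L : ℝ := Real.logb 2 nI - Real.logb 2 (Crk * k) with hLdef
  have hmd : ((m:ℝ)) * ((d:ℝ)-1) ≤ L + ((d:ℝ)-1) := by
    have h := hlmax
    rw [hlm] at h
    push_cast at h
    have h3 : ((d:ℝ)*m)*((d:ℝ)-1) ≤ (d:ℝ)*L + (d:ℝ)*((d:ℝ)-1) := by
      have h2 := mul_le_mul_of_nonneg_right h hD1.le
      have e : ((d:ℝ) / ((d:ℝ)-1) * L + d) * ((d:ℝ)-1) = (d:ℝ)*L + (d:ℝ)*((d:ℝ)-1) := by
        field_simp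
      rw [e] at h2
      exact h2
    nlinarith [h3, hDpos]
  have hBL : (2:ℝ) ^ L = B := by
    rw [hLdef, Real.rpow_sub (by norm_num : (0:ℝ) < 2),
      Real.rpow_logb (by norm_num) (by norm_num) hnIpos,
      Real.rpow_logb (by norm_num) (by norm_num) hCk]
  have hxm : x^m ≤ x * B := by
    have e1 : x^m = (2:ℝ) ^ ((((d-1)*m : ℕ)):ℝ) := by
      rw [Real.rpow_natCast, hxdef, pow_mul]
    have e2 : ((((d-1)*m : ℕ)):ℝ) = (m:ℝ) * ((d:ℝ)-1) := by
      push_cast [Nat.cast_sub (by omega : 1 ≤ d)]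
      ring
    have e3 : x = (2:ℝ) ^ ((((d-1) : ℕ)):ℝ) := by
      rw [Real.rpow_natCast, hxdef]
    have hle : (2:ℝ) ^ ((m:ℝ) * ((d:ℝ)-1)) ≤ (2:ℝ) ^ (L + ((d:ℝ)-1)) :=
      Real.rpow_le_rpow_of_exponent_le (by norm_num) hmd
    have e4 : (2:ℝ) ^ (L + ((d:ℝ)-1)) = x * B := by
      rw [Real.rpow_add (by norm_num : (0:ℝ) < 2), hBL, e3]
      have : ((((d-1) : ℕ)):ℝ) = (d:ℝ)-1 := by
        push_cast [Nat.cast_sub (by omega : 1 ≤ d)]; ring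
      rw [this]; ring
    rw [e1, e2]
    rw [e4] at hle
    exact hle
  -- geometric sum
  have hx1' : (0:ℝ) < x - 1 := by linarith
  have hG : (∑ j ∈ Finset.range m, x^(j+1)) = x * ((x^m - 1)/(x-1)) := by
    calc (∑ j ∈ Finset.range m, x^(j+1)) = ∑ j ∈ Finset.range m, x * x^j := by
          apply Finset.sum_congr rfl; intro j _; rw [pow_succ]; ring
    _ = x * ∑ j ∈ Finset.range m, x^j := (Finset.mul_sum _ _ _).symm
    _ = x * ((x^m - 1)/(x-1)) := by rw [geom_sum_eq hx1.ne' m]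
  -- assemble
  have hmain := key m (by omega)
  rw [hG] at hmain
  have hfrac : (x^m - 1)/(x-1) ≤ (x*B - 1)/(x-1) := by
    gcongr
  have hstep2 : Cnb * A * (1 + d * (x * ((x^m - 1)/(x-1)))) ≤
      Cnb * A * (1 + d * (x * ((x*B - 1)/(x-1)))) := by
    gcongr
  have hkey : 1 + (d:ℝ) * (x * ((x*B - 1)/(x-1))) < (d:ℝ)*(x+2)*B := by
    rw [← mul_lt_mul_iff_of_pos_right hx1']
    have e1 : (1 + (d:ℝ) * (x * ((x*B - 1)/(x-1)))) * (x-1)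
        = (x-1) + (d:ℝ)*(x*(x*B-1)) := by
      field_simp
    rw [e1]
    have h1 : (0:ℝ) ≤ (d:ℝ)*B*(x-2) :=
      mul_nonneg (mul_nonneg hDpos.le hB.le) (by linarith)
    have h2 : 2*x ≤ (d:ℝ)*x := mul_le_mul_of_nonneg_right hd2 (by linarith)
    linarith only [h1, h2, hx2]
  have hRHS : Cnb * A * ((d:ℝ)*(x+2)*B) =
      Cnb * d * A * (x + 2) * Crk⁻¹ * (k:ℝ)⁻¹ * nI := by
    rw [hBdef]
    field_simp
  have hcast : ((∑ ℓ ∈ Finset.range (lmax + 1), N ℓ : ℕ) : ℝ)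
      = ∑ ℓ ∈ Finset.range (d*m+1), (N ℓ:ℝ) := by
    rw [hlm]; push_cast; ring
  rw [hcast]
  calc (∑ ℓ ∈ Finset.range (d*m+1), (N ℓ:ℝ))
      ≤ Cnb * A * (1 + d * (x * ((x^m - 1)/(x-1)))) := hmain
    _ ≤ Cnb * A * (1 + d * (x * ((x*B - 1)/(x-1)))) := hstep2
    _ < Cnb * A * ((d:ℝ)*(x+2)*B) := by
        have hCA : 0 < Cnb * A := mul_pos hCnb hA
        exact (mul_lt_mul_iff_of_pos_left hCA).mpr hkey
    _ = Cnb * d * A * (x + 2) * Crk⁻¹ * (k:ℝ)⁻¹ * nI := hRHS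
end
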